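/- The power series expansion of 1/H(−z), where H(z) = (1 + 8z + 22z² + 8z³ + z⁴)/(1−z)⁶, has a negative coefficient: specifically the coefficient of z⁷ is −62320. Consequently H(−z)·P(z) = 1 has no solution P with all coefficients nonnegative. -/

import Mathlib

open PowerSeries in
/-- The power series 1/H(−z), where H(z) = (1 + 8z + 22z² + 8z³ + z⁴)/(1−z)⁶ is the
Hilbert series of R_{1⁸} — i.e. the series (1+z)⁶/(1 − 8z + 22z² − 8z³ + z⁴) — has
coefficient −62320 at z⁷; consequently H(−z)·P(z) = 1 has no solution P with
nonnegative coefficients. -/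
theorem stmt19 :
    (PowerSeries.coeff (R := ℚ) 7)
        ((1 + X) ^ 6 *
          (1 - 8 * X + 22 * X ^ 2 - 8 * X ^ 3 + X ^ 4 : PowerSeries ℚ)⁻¹)
      = -62320 ∧
    ¬ ∃ P : PowerSeries ℚ, (∀ k, 0 ≤ PowerSeries.coeff (R := ℚ) k P) ∧
        (1 - 8 * X + 22 * X ^ 2 - 8 * X ^ 3 + X ^ 4 : PowerSeries ℚ) * P
          = (1 + X) ^ 6 := by
  set D : PowerSeries ℚ := 1 - 8 * X + 22 * X ^ 2 - 8 * X ^ 3 + X ^ 4 with hDdef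
  have h8 : (8 : PowerSeries ℚ) = C (R := ℚ) 8 := (map_ofNat (C (R := ℚ)) 8).symm
  have h22 : (22 : PowerSeries ℚ) = C (R := ℚ) 22 := (map_ofNat (C (R := ℚ)) 22).symm
  have h6 : (6 : PowerSeries ℚ) = C (R := ℚ) 6 := (map_ofNat (C (R := ℚ)) 6).symm
  have h15 : (15 : PowerSeries ℚ) = C (R := ℚ) 15 := (map_ofNat (C (R := ℚ)) 15).symm
  have h20 : (20 : PowerSeries ℚ) = C (R := ℚ) 20 := (map_ofNat (C (R := ℚ)) 20).symm
  have hD : ∀ n, coeff (R := ℚ) n D = if n = 0 then 1 else if n = 1 then -8 else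
      if n = 2 then 22 else if n = 3 then -8 else if n = 4 then 1 else 0 := by
    intro n
    rw [hDdef, h8, h22]
    rcases n with _|_|_|_|_|n <;>
      simp [coeff_X_pow, PowerSeries.coeff_X, coeff_C_mul]
  have hc0 : constantCoeff (R := ℚ) D = 1 := by
    have := hD 0
    rw [← PowerSeries.coeff_zero_eq_constantCoeff]
    simpa using this
  have hD0 : constantCoeff (R := ℚ) D ≠ 0 := by rw [hc0]; norm_num
  have hunit : D * D⁻¹ = 1 := PowerSeries.mul_inv_cancel _ hD0
  have e1 := congrArg (coeff (R := ℚ) 1) hunit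
  have e2 := congrArg (coeff (R := ℚ) 2) hunit
  have e3 := congrArg (coeff (R := ℚ) 3) hunit
  have e4 := congrArg (coeff (R := ℚ) 4) hunit
  have e5 := congrArg (coeff (R := ℚ) 5) hunit
  have e6 := congrArg (coeff (R := ℚ) 6) hunit
  have e7 := congrArg (coeff (R := ℚ) 7) hunit
  simp [coeff_mul, Finset.Nat.sum_antidiagonal_eq_sum_range_succ_mk,
    Finset.sum_range_succ, hD] at e1 e2 e3 e4 e5 e6 e7
  have s0 : coeff (R := ℚ) 0 D⁻¹ = 1 := by
    rw [PowerSeries.coeff_zero_eq_constantCoeff, PowerSeries.constantCoeff_inv, hc0]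
    norm_num
  rw [PowerSeries.coeff_zero_eq_constantCoeff] at s0
  have hci : ((constantCoeff (R := ℚ)) D)⁻¹ = 1 := by rw [hc0]; norm_num
  rw [hci] at e1 e2 e3 e4
  have s1 : coeff (R := ℚ) 1 D⁻¹ = 8 := by linarith
  have s2 : coeff (R := ℚ) 2 D⁻¹ = 42 := by linarith
  have s3 : coeff (R := ℚ) 3 D⁻¹ = 168 := by linarith
  have s4 : coeff (R := ℚ) 4 D⁻¹ = 483 := by linarith
  have s5 : coeff (R := ℚ) 5 D⁻¹ = 496 := by linarith
  have s6 : coeff (R := ℚ) 6 D⁻¹ = -5356 := by linarith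
  have s7 : coeff (R := ℚ) 7 D⁻¹ = -50064 := by linarith
  have hBexp : ((1 : PowerSeries ℚ) + X) ^ 6 =
      1 + 6 * X + 15 * X ^ 2 + 20 * X ^ 3 + 15 * X ^ 4 + 6 * X ^ 5 + X ^ 6 := by
    ring
  have hB : ∀ n, coeff (R := ℚ) n (((1 : PowerSeries ℚ) + X) ^ 6) =
      if n = 0 then 1 else if n = 1 then 6 else if n = 2 then 15 else
      if n = 3 then 20 else if n = 4 then 15 else if n = 5 then 6 else
      if n = 6 then 1 else 0 := by
    intro n
    rw [hBexp, h6, h15, h20]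
    rcases n with _|_|_|_|_|_|_|n <;>
      simp [coeff_X_pow, PowerSeries.coeff_X, coeff_C_mul]
  have hmain : (PowerSeries.coeff (R := ℚ) 7) ((1 + X) ^ 6 * D⁻¹) = -62320 := by
    rw [PowerSeries.coeff_mul, Finset.Nat.sum_antidiagonal_eq_sum_range_succ_mk]
    simp only [Finset.sum_range_succ, Finset.sum_range_zero, hB]
    norm_num [s0, s1, s2, s3, s4, s5, s6, s7]
  refine ⟨hmain, ?_⟩
  rintro ⟨P, hpos, hP⟩
  have hP' : P = (1 + X) ^ 6 * D⁻¹ := by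
    have : D⁻¹ * (D * P) = D⁻¹ * (1 + X) ^ 6 := by rw [hP]
    rwa [← mul_assoc, mul_comm D⁻¹ D, hunit, one_mul, mul_comm D⁻¹] at this
  have := hpos 7
  rw [hP', hmain] at this
  linarith
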